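/- Let |ψ⟩ be a normalized state of the N-spin system satisfying the local-reversibility bound with function f. Let L be a subset of the spins and P_L a projector supported on L with α := ‖P_L|ψ⟩‖ > 0 and β := ‖(I − P_L)|ψ⟩‖ > 0, and set |ψ_a⟩ := P_L|ψ⟩/α and |ψ_b⟩ := (I − P_L)|ψ⟩/β. Then for every positive integer q there exists a q-local operator O such that ‖O|ψ_a⟩ − |ψ_b⟩‖ ≤ f(q/√|L|) / (α² β). -/

import Mathlib

noncomputable section

open scoped ComplexConjugate

/-- The Hilbert space of `N` spins, each of local dimension `d`:
the `N`-fold tensor product `⊗ ℂ^d`, realized as the space with orthonormal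
basis indexed by configurations `Fin N → Fin d`. -/
abbrev SpinSpace (N d : ℕ) : Type := EuclideanSpace ℂ (Fin N → Fin d)

/-- Operators on the spin system. -/
abbrev SpinOp (N d : ℕ) : Type := SpinSpace N d →L[ℂ] SpinSpace N d

variable {N d : ℕ}

/-- The standard (computational) basis vector labelled by a configuration. -/
def basisVec (f : Fin N → Fin d) : SpinSpace N d := EuclideanSpace.single f 1

/-- The matrix entry `⟨f| A |g⟩` of an operator in the computational basis. -/
def matEntry (A : SpinOp N d) (f g : Fin N → Fin d) : ℂ :=
  inner ℂ (basisVec f) (A (basisVec g))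

/-- `A` is supported on the subset `X` of spins: under the tensor factorization
`ℋ ≅ ℋ_X ⊗ ℋ_{Xᶜ}` it has the form `o ⊗ I`.  Concretely: matrix entries vanish
unless the two configurations agree outside `X`, and entries depend only on the
restrictions of the configurations to `X`. -/
def SupportedOn (X : Finset (Fin N)) (A : SpinOp N d) : Prop :=
  (∀ f g : Fin N → Fin d, (∃ i, i ∉ X ∧ f i ≠ g i) → matEntry A f g = 0) ∧
  (∀ f g f' g' : Fin N → Fin d,
      (∀ i ∈ X, f i = f' i) → (∀ i ∈ X, g i = g' i) →
      (∀ i, i ∉ X → f i = g i) → (∀ i, i ∉ X → f' i = g' i) →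
      matEntry A f g = matEntry A f' g')

/-- A `q`-local operator: a sum of operators, each supported on at most `q` spins. -/
def IsLocalOp (q : ℕ) (A : SpinOp N d) : Prop :=
  ∃ (n : ℕ) (X : Fin n → Finset (Fin N)) (o : Fin n → SpinOp N d),
    (∀ t, (X t).card ≤ q ∧ SupportedOn (X t) (o t)) ∧ A = ∑ t, o t

/-- A `k`-local Hamiltonian with interaction strength `g`: a sum of Hermitian
terms, each supported on at most `k` spins, such that for every spin the total
norm of the terms acting on it is at most `g`. -/
def IsKLocalHamiltonian (k : ℕ) (g : ℝ) (H : SpinOp N d) : Prop :=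
  ∃ (n : ℕ) (X : Fin n → Finset (Fin N)) (h : Fin n → SpinOp N d),
    (∀ t, (X t).card ≤ k ∧ SupportedOn (X t) (h t) ∧ IsSelfAdjoint (h t)) ∧
    (∀ i : Fin N, ∑ t ∈ Finset.univ.filter (fun t => i ∈ X t), ‖h t‖ ≤ g) ∧
    H = ∑ t, h t

/-- An additive operator `A = ∑_{i ∈ L} a_i`, each `a_i` Hermitian, supported on
the single spin `i`, with `‖a_i‖ ≤ 1`. -/
def IsAdditiveOn (L : Finset (Fin N)) (a : Fin N → SpinOp N d) (A : SpinOp N d) : Prop :=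
  (∀ i ∈ L, SupportedOn {i} (a i) ∧ IsSelfAdjoint (a i) ∧ ‖a i‖ ≤ 1) ∧
  A = ∑ i ∈ L, a i

/-- The span of all eigenvectors of `A` whose (real) eigenvalue satisfies `P`. -/
def eigSpan (A : SpinOp N d) (P : ℝ → Prop) : Submodule ℂ (SpinSpace N d) :=
  ⨆ (a : ℝ) (_ : P a), Module.End.eigenspace (A : SpinSpace N d →ₗ[ℂ] SpinSpace N d) (a : ℂ)

/-- Spectral projector of `A` onto the eigenvalues satisfying `P` (the orthogonal
projection onto the span of the corresponding eigenvectors). -/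
def specProj (A : SpinOp N d) (P : ℝ → Prop) : SpinOp N d :=
  (eigSpan A P).subtypeL.comp (eigSpan A P).orthogonalProjectionOnto

/-- `m` is a median of `A` in the state `ψ`. -/
def IsMedian (A : SpinOp N d) (ψ : SpinSpace N d) (m : ℝ) : Prop :=
  (1:ℝ)/2 ≤ (inner ℂ ψ ((specProj A (fun a => a ≤ m)) ψ) : ℂ).re ∧
  (1:ℝ)/2 ≤ (inner ℂ ψ ((specProj A (fun a => m ≤ a)) ψ) : ℂ).re

/-- The state `ψ` satisfies the local-reversibility bound with function `f`. -/
def SatisfiesLR (f : ℝ → ℝ) (ψ : SpinSpace N d) : Prop :=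
  ∀ (L : Finset (Fin N)) (Γ : SpinOp N d), SupportedOn L Γ →
    (inner ℂ ψ (Γ ψ) : ℂ) ≠ 0 →
    ∀ q : ℕ, 0 < q →
      ∃ R : SpinOp N d, IsLocalOp q R ∧
        ‖R (Γ ψ) - ψ‖ ≤ ‖Γ‖ / ‖(inner ℂ ψ (Γ ψ) : ℂ)‖ * f ((q : ℝ) / Real.sqrt (L.card))

/-- `H` has ground energy `0` with unique normalized ground state `Ω` and spectral
gap (at least) `δE`: `Ω` is a null state, every null state is proportional to `Ω`,
and on the orthogonal complement of `Ω` the energy is at least `δE`. -/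
def IsGappedGround (H : SpinOp N d) (Ω : SpinSpace N d) (δE : ℝ) : Prop :=
  ‖Ω‖ = 1 ∧ H Ω = 0 ∧
  (∀ φ : SpinSpace N d, H φ = 0 → ∃ c : ℂ, φ = c • Ω) ∧
  (∀ φ : SpinSpace N d, (inner ℂ Ω φ : ℂ) = 0 → δE * ‖φ‖ ^ 2 ≤ (inner ℂ φ (H φ) : ℂ).re)

section LRAux
variable {N d : ℕ}

lemma matEntry_smul (c : ℂ) (A : SpinOp N d) (f g : Fin N → Fin d) :
    matEntry (c • A) f g = c * matEntry A f g := by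
  simp [matEntry, inner_smul_right]

lemma SupportedOn.smul {X : Finset (Fin N)} {A : SpinOp N d} (h : SupportedOn X A) (c : ℂ) :
    SupportedOn X (c • A) := by
  refine ⟨fun f g hfg => ?_, fun f g f' g' h1 h2 h3 h4 => ?_⟩
  · rw [matEntry_smul, h.1 f g hfg, mul_zero]
  · rw [matEntry_smul, matEntry_smul, h.2 f g f' g' h1 h2 h3 h4]

lemma matEntry_one (f g : Fin N → Fin d) :
    matEntry (1 : SpinOp N d) f g = if f = g then 1 else 0 := by
  simp only [matEntry, ContinuousLinearMap.one_apply, basisVec]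
  rw [EuclideanSpace.inner_single_left]
  simp [EuclideanSpace.single_apply, eq_comm]

lemma supportedOn_one : SupportedOn (∅ : Finset (Fin N)) (1 : SpinOp N d) := by
  constructor
  · rintro f g ⟨i, -, hi⟩
    rw [matEntry_one, if_neg (fun h => hi (congrFun h i))]
  · intro f g f' g' _ _ h3 h4
    have hfg : f = g := funext fun i => h3 i (Finset.notMem_empty i)
    have hfg' : f' = g' := funext fun i => h4 i (Finset.notMem_empty i)
    rw [matEntry_one, matEntry_one, if_pos hfg, if_pos hfg']

lemma IsLocalOp.smul {q : ℕ} {A : SpinOp N d} (h : IsLocalOp q A) (c : ℂ) :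
    IsLocalOp q (c • A) := by
  obtain ⟨n, X, o, h1, h2⟩ := h
  exact ⟨n, X, fun t => c • o t, fun t => ⟨(h1 t).1, (h1 t).2.smul c⟩,
    by rw [h2, Finset.smul_sum]⟩

lemma IsLocalOp.add {q : ℕ} {A B : SpinOp N d} (hA : IsLocalOp q A) (hB : IsLocalOp q B) :
    IsLocalOp q (A + B) := by
  obtain ⟨n, X, o, h1, h2⟩ := hA
  obtain ⟨m, Y, p, h3, h4⟩ := hB
  refine ⟨n + m, Fin.addCases X Y, Fin.addCases o p, fun t => ?_, ?_⟩
  · refine Fin.addCases (fun i => ?_) (fun i => ?_) t <;> simp [h1, h3]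
  · rw [h2, h4, Fin.sum_univ_add]
    simp

lemma isLocalOp_one {q : ℕ} : IsLocalOp q (1 : SpinOp N d) :=
  ⟨1, fun _ => ∅, fun _ => 1, fun _ => ⟨by simp, supportedOn_one⟩, by simp⟩

lemma IsLocalOp.sub_one {q : ℕ} {A : SpinOp N d} (h : IsLocalOp q A) :
    IsLocalOp q (A - 1) := by
  have h1 : ((-1 : ℂ) • (1 : SpinOp N d)) = -1 := by module
  have := h.add ((isLocalOp_one (q := q) (N := N) (d := d)).smul (-1 : ℂ))
  rw [h1] at this
  rwa [sub_eq_add_neg]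

lemma inner_proj_eq {ψ : SpinSpace N d} {P : SpinOp N d} (hproj : P.comp P = P)
    (hsa : IsSelfAdjoint P) : (inner ℂ ψ (P ψ) : ℂ) = (‖P ψ‖ : ℂ) ^ 2 := by
  have hadj : ContinuousLinearMap.adjoint P = P :=
    (ContinuousLinearMap.isSelfAdjoint_iff').mp hsa
  have hPP : P (P ψ) = P ψ := by rw [← ContinuousLinearMap.comp_apply, hproj]
  calc (inner ℂ ψ (P ψ) : ℂ) = inner ℂ ψ (P (P ψ)) := by rw [hPP]
    _ = inner ℂ (ContinuousLinearMap.adjoint P ψ) (P ψ) := by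
        rw [ContinuousLinearMap.adjoint_inner_left]
    _ = inner ℂ (P ψ) (P ψ) := by rw [hadj]
    _ = (‖P ψ‖ : ℂ) ^ 2 := by rw [inner_self_eq_norm_sq_to_K]; norm_cast

lemma proj_norm_le_one {P : SpinOp N d} (hproj : P.comp P = P) (hsa : IsSelfAdjoint P) :
    ‖P‖ ≤ 1 := by
  refine P.opNorm_le_bound zero_le_one (fun x => ?_)
  rw [one_mul]
  have h1 : ((‖P x‖ : ℂ) ^ 2) = inner ℂ x (P x) := (inner_proj_eq hproj hsa).symm
  have h2 : ‖(inner ℂ x (P x) : ℂ)‖ ≤ ‖x‖ * ‖P x‖ := norm_inner_le_norm x (P x)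
  rw [← h1] at h2
  have h3 : ‖((‖P x‖ : ℂ) ^ 2)‖ = ‖P x‖ ^ 2 := by
    rw [norm_pow, Complex.norm_real, Real.norm_of_nonneg (norm_nonneg _)]
  rw [h3] at h2
  nlinarith [norm_nonneg (P x), norm_nonneg x]

end LRAux

theorem lr_macroscopic_decomposition
    {N d : ℕ} (f : ℝ → ℝ) (hf : ∀ x, 0 ≤ f x)
    (ψ : SpinSpace N d) (hψ : ‖ψ‖ = 1) (hLR : SatisfiesLR f ψ)
    (L : Finset (Fin N)) (P : SpinOp N d) (hPL : SupportedOn L P)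
    (hproj : P.comp P = P) (hsa : IsSelfAdjoint P)
    (hα : 0 < ‖P ψ‖) (hβ : 0 < ‖ψ - P ψ‖)
    (q : ℕ) (hq : 0 < q) :
    ∃ O : SpinOp N d, IsLocalOp q O ∧
      ‖O ((‖P ψ‖ : ℂ)⁻¹ • P ψ) - (‖ψ - P ψ‖ : ℂ)⁻¹ • (ψ - P ψ)‖ ≤
        f ((q : ℝ) / Real.sqrt L.card) / (‖P ψ‖ ^ 2 * ‖ψ - P ψ‖) := by
  have hinner : (inner ℂ ψ (P ψ) : ℂ) = (‖P ψ‖ : ℂ) ^ 2 := inner_proj_eq hproj hsa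
  have hαne : (‖P ψ‖ : ℝ) ≠ 0 := ne_of_gt hα
  have hβne : (‖ψ - P ψ‖ : ℝ) ≠ 0 := ne_of_gt hβ
  have hne : (inner ℂ ψ (P ψ) : ℂ) ≠ 0 := by
    rw [hinner]
    exact pow_ne_zero 2 (by exact_mod_cast hαne)
  obtain ⟨R, hRloc, hRbound⟩ := hLR L P hPL hne q hq
  have habs : ‖(inner ℂ ψ (P ψ) : ℂ)‖ = ‖P ψ‖ ^ 2 := by
    rw [hinner, norm_pow, Complex.norm_real, Real.norm_of_nonneg (norm_nonneg _)]
  set F : ℝ := f ((q : ℝ) / Real.sqrt L.card) with hF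
  have hFnn : 0 ≤ F := hf _
  set c : ℂ := (‖P ψ‖ : ℂ) * (‖ψ - P ψ‖ : ℂ)⁻¹ with hc
  refine ⟨c • (R - 1), hRloc.sub_one.smul c, ?_⟩
  have hvec : (c • (R - 1)) ((‖P ψ‖ : ℂ)⁻¹ • P ψ) - (‖ψ - P ψ‖ : ℂ)⁻¹ • (ψ - P ψ)
      = (‖ψ - P ψ‖ : ℂ)⁻¹ • (R (P ψ) - ψ) := by
    have hac : (‖P ψ‖ : ℂ) ≠ 0 := by exact_mod_cast hαne
    have hca : (‖P ψ‖ : ℂ)⁻¹ * c = (‖ψ - P ψ‖ : ℂ)⁻¹ := by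
      rw [hc, ← mul_assoc, inv_mul_cancel₀ hac, one_mul]
    simp only [ContinuousLinearMap.smul_apply, map_smul, smul_smul, hca,
      ContinuousLinearMap.sub_apply, ContinuousLinearMap.one_apply]
    rw [← smul_sub]
    congr 1
    abel
  rw [hvec, norm_smul]
  have hnb : ‖((‖ψ - P ψ‖ : ℂ)⁻¹)‖ = ‖ψ - P ψ‖⁻¹ := by
    rw [norm_inv, Complex.norm_real, Real.norm_of_nonneg (norm_nonneg _)]
  rw [hnb]
  have hb1 : ‖R (P ψ) - ψ‖ ≤ F / ‖P ψ‖ ^ 2 := by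
    refine hRbound.trans ?_
    rw [habs]
    rw [div_mul_eq_mul_div]
    apply div_le_div_of_nonneg_right ?_ (by positivity)
    · calc ‖P‖ * F ≤ 1 * F :=
        mul_le_mul_of_nonneg_right (proj_norm_le_one hproj hsa) hFnn
      _ = F := one_mul F
  calc ‖ψ - P ψ‖⁻¹ * ‖R (P ψ) - ψ‖ ≤ ‖ψ - P ψ‖⁻¹ * (F / ‖P ψ‖ ^ 2) :=
        mul_le_mul_of_nonneg_left hb1 (by positivity)
    _ = F / (‖P ψ‖ ^ 2 * ‖ψ - P ψ‖) := by
        rw [mul_comm, ← div_eq_mul_inv, div_div]
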